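/- In the field of rational functions ℚ(v), set z = v/(1 + 3v + v²) and for each integer h ≥ 1 define p_h = z(1+v) · ((1+2v)^{h−1} − v^h (v+2)^{h−1}) / ((1+2v)^{h−1} − v^{h+1} (v+2)^{h−1}). Then p_1 = z and for every h ≥ 1 one has p_{h+1} = −z + (2z − z²)/(1 − p_h). -/

import Mathlib

noncomputable section

open Polynomial in
lemma aux_ne (n m : ℕ) (hm : 1 ≤ m) :
    (1 + 2 * RatFunc.X) ^ n - RatFunc.X ^ m * (RatFunc.X + 2) ^ n ≠ (0 : RatFunc ℚ) := by
  have hq : ((1 + 2 * X) ^ n - X ^ m * (X + 2) ^ n : ℚ[X]) ≠ 0 := by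
    intro h
    have := congrArg (Polynomial.eval 0) h
    simp [zero_pow (by omega : m ≠ 0)] at this
  have := (map_ne_zero_iff (algebraMap ℚ[X] (RatFunc ℚ))
    (IsFractionRing.injective ℚ[X] (RatFunc ℚ))).mpr hq
  simpa [map_sub, map_add, map_mul, map_pow, map_one, map_ofNat, RatFunc.algebraMap_X] using this

open Polynomial in
lemma w_ne : (1 + 3 * RatFunc.X + RatFunc.X ^ 2 : RatFunc ℚ) ≠ 0 := by
  have hq : (1 + 3 * X + X ^ 2 : ℚ[X]) ≠ 0 := by
    intro h
    have := congrArg (Polynomial.eval 0) h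
    simp at this
  have := (map_ne_zero_iff (algebraMap ℚ[X] (RatFunc ℚ))
    (IsFractionRing.injective ℚ[X] (RatFunc ℚ))).mpr hq
  simpa [map_add, map_mul, map_pow, map_one, map_ofNat, RatFunc.algebraMap_X] using this

lemma step_lemma (V W D1 N2 D2 z : RatFunc ℚ) (hW : W ≠ 0) (hD2 : D2 ≠ 0)
    (hz : z = V / W)
    (hcross : V * (1 + V) * N2 = -V * D2 + (2 * V * W - V ^ 2) * D1) :
    z * (1 + V) * N2 / D2 = -z + (2 * z - z ^ 2) * (W * D1) / D2 := by
  rw [div_eq_iff hD2, add_mul, div_mul_cancel₀ _ hD2, hz]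
  field_simp
  linear_combination hcross

/-- with the substitution `z = v/(1 + 3v + v²)` in `ℚ(v)`, the rational
functions `p_h = z(1+v)((1+2v)^{h-1} - v^h (v+2)^{h-1})/((1+2v)^{h-1} - v^{h+1}(v+2)^{h-1})`
satisfy `p_1 = z` and `p_{h+1} = -z + (2z - z²)/(1 - p_h)` for all `h ≥ 1`. -/
theorem marked_ordered_trees_height_recursion
    (z : RatFunc ℚ)
    (hz : z = RatFunc.X / (1 + 3 * RatFunc.X + RatFunc.X ^ 2))
    (p : ℕ → RatFunc ℚ)
    (hp : ∀ h, 1 ≤ h → p h = z * (1 + RatFunc.X) *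
        ((1 + 2 * RatFunc.X) ^ (h - 1) - RatFunc.X ^ h * (RatFunc.X + 2) ^ (h - 1)) /
        ((1 + 2 * RatFunc.X) ^ (h - 1) - RatFunc.X ^ (h + 1) * (RatFunc.X + 2) ^ (h - 1))) :
    p 1 = z ∧ ∀ h, 1 ≤ h → p (h + 1) = -z + (2 * z - z ^ 2) / (1 - p h) := by
  set V : RatFunc ℚ := RatFunc.X with hV
  have hw : (1 + 3 * V + V ^ 2 : RatFunc ℚ) ≠ 0 := w_ne
  constructor
  · rw [hp 1 (le_refl 1), hz]
    have h2 : (1 : RatFunc ℚ) - V ^ 2 * (V + 2) ^ 0 ≠ 0 := by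
      simpa using aux_ne 0 2 (by norm_num)
    simp only [pow_zero, mul_one] at h2 ⊢
    have h2' : (1 : RatFunc ℚ) - V ^ 2 ≠ 0 := by simpa using h2
    simp only [Nat.sub_self, pow_zero, mul_one, pow_one, Nat.reduceAdd]
    field_simp
    ring
  · intro h hh
    obtain ⟨k, rfl⟩ : ∃ k, h = k + 1 := ⟨h - 1, by omega⟩
    have hD1 : (1 + 2 * V) ^ k - V ^ (k + 2) * (V + 2) ^ k ≠ 0 := aux_ne k (k + 2) (by omega)
    have hD2 : (1 + 2 * V) ^ (k + 1) - V ^ (k + 3) * (V + 2) ^ (k + 1) ≠ 0 :=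
      aux_ne (k + 1) (k + 3) (by omega)
    have hph := hp (k + 1) (by omega)
    have hph1 := hp (k + 2) (by omega)
    have key : 1 - p (k + 1) =
        ((1 + 2 * V) ^ (k + 1) - V ^ (k + 3) * (V + 2) ^ (k + 1)) /
        ((1 + 3 * V + V ^ 2) * ((1 + 2 * V) ^ k - V ^ (k + 2) * (V + 2) ^ k)) := by
      rw [hph, hz]
      simp only [Nat.add_sub_cancel]
      rw [show k + 1 + 1 = k + 2 by ring]
      generalize hDD : (1 + 2 * V) ^ k - V ^ (k + 2) * (V + 2) ^ k = D at hD1 ⊢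
      generalize hWW : 1 + 3 * V + V ^ 2 = W at hw ⊢
      field_simp
      rw [← hDD, ← hWW]
      ring
    rw [hph1, key, div_div_eq_mul_div]
    exact step_lemma V (1 + 3 * V + V ^ 2)
      ((1 + 2 * V) ^ k - V ^ (k + 2) * (V + 2) ^ k)
      ((1 + 2 * V) ^ (k + 1) - V ^ (k + 2) * (V + 2) ^ (k + 1))
      ((1 + 2 * V) ^ (k + 1) - V ^ (k + 3) * (V + 2) ^ (k + 1))
      z hw hD2 hz (by simp only [pow_succ]; ring)
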